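/- Let 𝒜 : ℝ^{m×n} → ℝ^p be a linear map, Δ ∈ [0,1), and let 𝒮 ⊆ ℝ^{m×n} be a linear subspace such that (1−Δ)‖Z‖_F² ≤ ‖𝒜(Z)‖₂² ≤ (1+Δ)‖Z‖_F² for all Z ∈ 𝒮. Let P denote the orthogonal projection of ℝ^{m×n} (with the Frobenius inner product) onto 𝒮, let 𝒜* be the adjoint of 𝒜, and let α ≥ 0. Then: (i) for every Z ∈ 𝒮, (1 − α(1+Δ))‖Z‖_F² ≤ ⟨Z, Z − α P(𝒜*(𝒜(Z)))⟩ ≤ (1 − α(1−Δ))‖Z‖_F²; and (ii) for all Z₁, Z₂ ∈ 𝒮, ⟨Z₁, Z₂⟩ − α⟨𝒜(Z₁), 𝒜(Z₂)⟩ ≤ max(|1 − α(1−Δ)|, |1 − α(1+Δ)|) · ‖Z₁‖_F · ‖Z₂‖_F. -/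

import Mathlib

open scoped BigOperators
open Matrix

noncomputable section

def mInner {m n : ℕ} (A B : Matrix (Fin m) (Fin n) ℝ) : ℝ := ∑ i, ∑ j, A i j * B i j

def frobSq {m n : ℕ} (A : Matrix (Fin m) (Fin n) ℝ) : ℝ := ∑ i, ∑ j, (A i j) ^ 2

def frobNorm {m n : ℕ} (A : Matrix (Fin m) (Fin n) ℝ) : ℝ := Real.sqrt (frobSq A)

def vInner {p : ℕ} (u v : Fin p → ℝ) : ℝ := ∑ i, u i * v i

def vNormSq {p : ℕ} (v : Fin p → ℝ) : ℝ := ∑ i, (v i) ^ 2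

def vNorm {p : ℕ} (v : Fin p → ℝ) : ℝ := Real.sqrt (vNormSq v)

/-- Number of nonzero entries of a matrix. -/
def sparseCount {m n : ℕ} (S : Matrix (Fin m) (Fin n) ℝ) : ℕ :=
  {q : Fin m × Fin n | S q.1 q.2 ≠ 0}.ncard

/-- `L` is `μ`-incoherent of rank at most `r`: `rank L ≤ r` and `L` admits a (truncated)
singular value decomposition `L = U * diagonal d * Vᵀ` with `U ∈ ℝ^{m×r}`, `V ∈ ℝ^{n×r}`
having orthonormal columns (the top `r` left/right singular vectors) whose rows satisfy
`‖Uᵀ eᵢ‖₂ ≤ √(μ r / m)` and `‖Vᵀ fⱼ‖₂ ≤ √(μ r / n)`. -/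
def Incoherent {m n : ℕ} (μ : ℝ) (r : ℕ) (L : Matrix (Fin m) (Fin n) ℝ) : Prop :=
  L.rank ≤ r ∧
  ∃ (U : Matrix (Fin m) (Fin r) ℝ) (d : Fin r → ℝ) (V : Matrix (Fin n) (Fin r) ℝ),
    Uᵀ * U = 1 ∧ Vᵀ * V = 1 ∧ (∀ k, 0 ≤ d k) ∧ L = U * Matrix.diagonal d * Vᵀ ∧
    (∀ i : Fin m, Real.sqrt (∑ k, (U i k) ^ 2) ≤ Real.sqrt (μ * r / m)) ∧
    (∀ j : Fin n, Real.sqrt (∑ k, (V j k) ^ 2) ≤ Real.sqrt (μ * r / n))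

/-- The set of low-rank plus sparse matrices `LS_{m,n}(r,s,μ)`. -/
def LS (m n r s : ℕ) (μ : ℝ) : Set (Matrix (Fin m) (Fin n) ℝ) :=
  {X | ∃ L S : Matrix (Fin m) (Fin n) ℝ,
      X = L + S ∧ Incoherent μ r L ∧ sparseCount S ≤ s}

section Helpers

lemma mInner_comm' {m n : ℕ} (A B : Matrix (Fin m) (Fin n) ℝ) :
    mInner A B = mInner B A := by
  unfold mInner
  refine Finset.sum_congr rfl fun i _ => Finset.sum_congr rfl fun j _ => ?_
  ring

lemma mInner_self' {m n : ℕ} (A : Matrix (Fin m) (Fin n) ℝ) :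
    mInner A A = frobSq A := by
  unfold mInner frobSq
  refine Finset.sum_congr rfl fun i _ => Finset.sum_congr rfl fun j _ => ?_
  ring

lemma mInner_sub_right {m n : ℕ} (A B C : Matrix (Fin m) (Fin n) ℝ) :
    mInner A (B - C) = mInner A B - mInner A C := by
  unfold mInner
  simp only [Matrix.sub_apply, ← Finset.sum_sub_distrib]
  refine Finset.sum_congr rfl fun i _ => Finset.sum_congr rfl fun j _ => ?_
  ring

lemma mInner_smul_right {m n : ℕ} (c : ℝ) (A B : Matrix (Fin m) (Fin n) ℝ) :
    mInner A (c • B) = c * mInner A B := by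
  unfold mInner
  simp only [Matrix.smul_apply, smul_eq_mul, Finset.mul_sum]
  refine Finset.sum_congr rfl fun i _ => Finset.sum_congr rfl fun j _ => ?_
  ring

lemma mInner_smul_smul {m n : ℕ} (c d : ℝ) (A B : Matrix (Fin m) (Fin n) ℝ) :
    mInner (c • A) (d • B) = (c * d) * mInner A B := by
  unfold mInner
  simp only [Matrix.smul_apply, smul_eq_mul, Finset.mul_sum]
  refine Finset.sum_congr rfl fun i _ => Finset.sum_congr rfl fun j _ => ?_
  ring

lemma frobSq_polar {m n : ℕ} (A B : Matrix (Fin m) (Fin n) ℝ) :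
    frobSq (A + B) - frobSq (A - B) = 4 * mInner A B := by
  unfold frobSq mInner
  simp only [Matrix.add_apply, Matrix.sub_apply, ← Finset.sum_sub_distrib, Finset.mul_sum]
  refine Finset.sum_congr rfl fun i _ => Finset.sum_congr rfl fun j _ => ?_
  ring

lemma vNormSq_polar {p : ℕ} (u v : Fin p → ℝ) :
    vNormSq (u + v) - vNormSq (u - v) = 4 * vInner u v := by
  unfold vNormSq vInner
  simp only [Pi.add_apply, Pi.sub_apply, ← Finset.sum_sub_distrib, Finset.mul_sum]
  refine Finset.sum_congr rfl fun i _ => ?_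
  ring

lemma vInner_self' {p : ℕ} (u : Fin p → ℝ) : vInner u u = vNormSq u := by
  unfold vInner vNormSq
  refine Finset.sum_congr rfl fun i _ => ?_
  ring

lemma vInner_smul_smul {p : ℕ} (c d : ℝ) (u v : Fin p → ℝ) :
    vInner (c • u) (d • v) = (c * d) * vInner u v := by
  unfold vInner
  simp only [Pi.smul_apply, smul_eq_mul, Finset.mul_sum]
  refine Finset.sum_congr rfl fun i _ => ?_
  ring

lemma frobSq_nonneg' {m n : ℕ} (A : Matrix (Fin m) (Fin n) ℝ) : 0 ≤ frobSq A :=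
  Finset.sum_nonneg fun _ _ => Finset.sum_nonneg fun _ _ => sq_nonneg _

lemma frobSq_smul' {m n : ℕ} (c : ℝ) (A : Matrix (Fin m) (Fin n) ℝ) :
    frobSq (c • A) = c ^ 2 * frobSq A := by
  unfold frobSq
  simp only [Matrix.smul_apply, smul_eq_mul, Finset.mul_sum]
  refine Finset.sum_congr rfl fun i _ => Finset.sum_congr rfl fun j _ => ?_
  ring

lemma frobSq_eq_zero' {m n : ℕ} (A : Matrix (Fin m) (Fin n) ℝ) (h : frobSq A = 0) :
    A = 0 := by
  ext i j
  have h1 := Finset.sum_eq_zero_iff_of_nonneg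
    (fun i _ => Finset.sum_nonneg fun j _ => sq_nonneg (A i j)) |>.mp h i (Finset.mem_univ i)
  have h2 := Finset.sum_eq_zero_iff_of_nonneg
    (fun j _ => sq_nonneg (A i j)) |>.mp h1 j (Finset.mem_univ j)
  exact pow_eq_zero_iff (by norm_num) |>.mp h2

end Helpers

/-- spectral bounds for `I − α P 𝒜* 𝒜` on a subspace `𝒮` on which `𝒜`
satisfies the RIP with constant `Δ`.  Here `P` is the orthogonal projection onto `𝒮`
(characterized by `P X ∈ 𝒮` and `X − P X ⟂ 𝒮`) and `𝒜*` the adjoint of `𝒜` with respect to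
the Frobenius inner product. -/
theorem projected_gradient_bounds
    (m n p : ℕ)
    (𝒜 : Matrix (Fin m) (Fin n) ℝ →ₗ[ℝ] (Fin p → ℝ))
    (𝒜adj : (Fin p → ℝ) →ₗ[ℝ] Matrix (Fin m) (Fin n) ℝ)
    (hadj : ∀ (X : Matrix (Fin m) (Fin n) ℝ) (v : Fin p → ℝ),
      vInner (𝒜 X) v = mInner X (𝒜adj v))
    (Δ : ℝ) (hΔ : Δ ∈ Set.Ico (0:ℝ) 1)
    (𝒮 : Submodule ℝ (Matrix (Fin m) (Fin n) ℝ))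
    (hRIP : ∀ Z ∈ 𝒮, (1 - Δ) * frobSq Z ≤ vNormSq (𝒜 Z) ∧ vNormSq (𝒜 Z) ≤ (1 + Δ) * frobSq Z)
    (P : Matrix (Fin m) (Fin n) ℝ →ₗ[ℝ] Matrix (Fin m) (Fin n) ℝ)
    (hPmem : ∀ X : Matrix (Fin m) (Fin n) ℝ, P X ∈ 𝒮)
    (hPorth : ∀ X : Matrix (Fin m) (Fin n) ℝ, ∀ Z ∈ 𝒮, mInner (X - P X) Z = 0)
    (α : ℝ) (hα : 0 ≤ α) :
    (∀ Z ∈ 𝒮,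
      (1 - α * (1 + Δ)) * frobSq Z ≤ mInner Z (Z - α • P (𝒜adj (𝒜 Z))) ∧
      mInner Z (Z - α • P (𝒜adj (𝒜 Z))) ≤ (1 - α * (1 - Δ)) * frobSq Z) ∧
    (∀ Z₁ ∈ 𝒮, ∀ Z₂ ∈ 𝒮,
      mInner Z₁ Z₂ - α * vInner (𝒜 Z₁) (𝒜 Z₂) ≤
        max |1 - α * (1 - Δ)| |1 - α * (1 + Δ)| * frobNorm Z₁ * frobNorm Z₂) := by
  -- key identity: for Z ∈ 𝒮, the quadratic form equals frobSq Z - α * vNormSq (𝒜 Z)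
  have key : ∀ Z ∈ 𝒮, mInner Z (Z - α • P (𝒜adj (𝒜 Z)))
      = frobSq Z - α * vNormSq (𝒜 Z) := by
    intro Z hZ
    set X := 𝒜adj (𝒜 Z) with hX
    have h1 : mInner Z (P X) = mInner Z X := by
      have h0 : mInner (X - P X) Z = 0 := hPorth X Z hZ
      rw [mInner_comm' (X - P X) Z, mInner_sub_right] at h0
      linarith
    rw [mInner_sub_right, mInner_smul_right, h1, mInner_self']
    have h2 : mInner Z X = vNormSq (𝒜 Z) := by
      rw [← hadj Z (𝒜 Z), vInner_self']
    rw [h2]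
  have part1 : ∀ Z ∈ 𝒮,
      (1 - α * (1 + Δ)) * frobSq Z ≤ mInner Z (Z - α • P (𝒜adj (𝒜 Z))) ∧
      mInner Z (Z - α • P (𝒜adj (𝒜 Z))) ≤ (1 - α * (1 - Δ)) * frobSq Z := by
    intro Z hZ
    obtain ⟨hlo, hhi⟩ := hRIP Z hZ
    rw [key Z hZ]
    constructor
    · nlinarith [frobSq_nonneg' Z]
    · nlinarith [frobSq_nonneg' Z]
  refine ⟨part1, ?_⟩
  set M : ℝ := max |1 - α * (1 - Δ)| |1 - α * (1 + Δ)| with hM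
  have hMnn : 0 ≤ M := le_trans (abs_nonneg _) (le_max_left _ _)
  -- |Q(Z)| ≤ M * frobSq Z for Z ∈ 𝒮
  have quad : ∀ Z ∈ 𝒮, |frobSq Z - α * vNormSq (𝒜 Z)| ≤ M * frobSq Z := by
    intro Z hZ
    obtain ⟨hlo, hhi⟩ := hRIP Z hZ
    have hfnn := frobSq_nonneg' Z
    rw [abs_le]
    constructor
    · have h1 : -(M * frobSq Z) ≤ (1 - α * (1 + Δ)) * frobSq Z := by
        have : -M ≤ 1 - α * (1 + Δ) := by
          have := le_trans (neg_abs_le (1 - α * (1 + Δ)))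
            (le_refl (1 - α * (1 + Δ)))
          have h2 : |1 - α * (1 + Δ)| ≤ M := le_max_right _ _
          linarith [neg_abs_le (1 - α * (1 + Δ))]
        nlinarith
      have h2 : (1 - α * (1 + Δ)) * frobSq Z ≤ frobSq Z - α * vNormSq (𝒜 Z) := by
        nlinarith
      linarith
    · have h1 : frobSq Z - α * vNormSq (𝒜 Z) ≤ (1 - α * (1 - Δ)) * frobSq Z := by
        nlinarith
      have h2 : (1 - α * (1 - Δ)) * frobSq Z ≤ M * frobSq Z := by
        have h3 : 1 - α * (1 - Δ) ≤ M :=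
          le_trans (le_abs_self _) (le_max_left _ _)
        nlinarith
      linarith
  -- bilinear bound with half-sum
  have bil : ∀ Z₁ ∈ 𝒮, ∀ Z₂ ∈ 𝒮,
      mInner Z₁ Z₂ - α * vInner (𝒜 Z₁) (𝒜 Z₂) ≤ M * (frobSq Z₁ + frobSq Z₂) / 2 := by
    intro Z₁ h₁ Z₂ h₂
    have hp := quad (Z₁ + Z₂) (Submodule.add_mem 𝒮 h₁ h₂)
    have hm := quad (Z₁ - Z₂) (Submodule.sub_mem 𝒮 h₁ h₂)
    have e1 : frobSq (Z₁ + Z₂) - frobSq (Z₁ - Z₂) = 4 * mInner Z₁ Z₂ := frobSq_polar Z₁ Z₂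
    have e2 : vNormSq (𝒜 (Z₁ + Z₂)) - vNormSq (𝒜 (Z₁ - Z₂))
        = 4 * vInner (𝒜 Z₁) (𝒜 Z₂) := by
      rw [map_add, map_sub]
      exact vNormSq_polar (𝒜 Z₁) (𝒜 Z₂)
    have e3 : frobSq (Z₁ + Z₂) + frobSq (Z₁ - Z₂) = 2 * (frobSq Z₁ + frobSq Z₂) := by
      unfold frobSq
      simp only [Matrix.add_apply, Matrix.sub_apply, ← Finset.sum_add_distrib, Finset.mul_sum]
      refine Finset.sum_congr rfl fun i _ => Finset.sum_congr rfl fun j _ => ?_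
      ring
    rw [abs_le] at hp hm
    nlinarith [hp.2, hm.1]
  intro Z₁ h₁ Z₂ h₂
  by_cases hz1 : frobSq Z₁ = 0
  · have hZ0 : Z₁ = 0 := frobSq_eq_zero' Z₁ hz1
    subst hZ0
    have : mInner (0 : Matrix (Fin m) (Fin n) ℝ) Z₂ = 0 := by
      unfold mInner; simp
    rw [this, map_zero]
    have : vInner (0 : Fin p → ℝ) (𝒜 Z₂) = 0 := by unfold vInner; simp
    rw [this]
    have : frobNorm (0 : Matrix (Fin m) (Fin n) ℝ) = 0 := by
      unfold frobNorm frobSq; simp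
    rw [this]
    simp
  by_cases hz2 : frobSq Z₂ = 0
  · have hZ0 : Z₂ = 0 := frobSq_eq_zero' Z₂ hz2
    subst hZ0
    have e1 : mInner Z₁ (0 : Matrix (Fin m) (Fin n) ℝ) = 0 := by
      unfold mInner; simp
    rw [e1, map_zero]
    have e2 : vInner (𝒜 Z₁) (0 : Fin p → ℝ) = 0 := by unfold vInner; simp
    rw [e2]
    have e3 : frobNorm (0 : Matrix (Fin m) (Fin n) ℝ) = 0 := by
      unfold frobNorm frobSq; simp
    rw [e3]
    simp
  -- scaling argument
  have hf1 : 0 < frobSq Z₁ := lt_of_le_of_ne (frobSq_nonneg' Z₁) (Ne.symm hz1)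
  have hf2 : 0 < frobSq Z₂ := lt_of_le_of_ne (frobSq_nonneg' Z₂) (Ne.symm hz2)
  have hn1 : 0 < frobNorm Z₁ := Real.sqrt_pos.mpr hf1
  have hn2 : 0 < frobNorm Z₂ := Real.sqrt_pos.mpr hf2
  set t : ℝ := Real.sqrt (frobNorm Z₂ / frobNorm Z₁) with ht
  have htpos : 0 < t := Real.sqrt_pos.mpr (div_pos hn2 hn1)
  have ht2 : t ^ 2 = frobNorm Z₂ / frobNorm Z₁ := Real.sq_sqrt (le_of_lt (div_pos hn2 hn1))
  have hbil := bil (t • Z₁) (Submodule.smul_mem 𝒮 t h₁)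
    (t⁻¹ • Z₂) (Submodule.smul_mem 𝒮 t⁻¹ h₂)
  have einn : mInner (t • Z₁) (t⁻¹ • Z₂) = mInner Z₁ Z₂ := by
    rw [mInner_smul_smul, mul_inv_cancel₀ (ne_of_gt htpos), one_mul]
  have evin : vInner (𝒜 (t • Z₁)) (𝒜 (t⁻¹ • Z₂)) = vInner (𝒜 Z₁) (𝒜 Z₂) := by
    rw [_root_.map_smul, _root_.map_smul, vInner_smul_smul, mul_inv_cancel₀ (ne_of_gt htpos), one_mul]
  rw [einn, evin] at hbil
  have hfs1 : frobSq (t • Z₁) = t ^ 2 * frobSq Z₁ := frobSq_smul' t Z₁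
  have hfs2 : frobSq (t⁻¹ • Z₂) = (t⁻¹) ^ 2 * frobSq Z₂ := frobSq_smul' t⁻¹ Z₂
  rw [hfs1, hfs2] at hbil
  have hsq1 : frobSq Z₁ = frobNorm Z₁ ^ 2 := by
    rw [frobNorm, Real.sq_sqrt (frobSq_nonneg' Z₁)]
  have hsq2 : frobSq Z₂ = frobNorm Z₂ ^ 2 := by
    rw [frobNorm, Real.sq_sqrt (frobSq_nonneg' Z₂)]
  have hv1 : t ^ 2 * frobSq Z₁ = frobNorm Z₁ * frobNorm Z₂ := by
    rw [ht2, hsq1]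
    field_simp
  have hv2 : (t⁻¹) ^ 2 * frobSq Z₂ = frobNorm Z₁ * frobNorm Z₂ := by
    rw [inv_pow, ht2, hsq2]
    field_simp
  rw [hv1, hv2] at hbil
  calc mInner Z₁ Z₂ - α * vInner (𝒜 Z₁) (𝒜 Z₂)
      ≤ M * (frobNorm Z₁ * frobNorm Z₂ + frobNorm Z₁ * frobNorm Z₂) / 2 := hbil
    _ = M * frobNorm Z₁ * frobNorm Z₂ := by ring
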